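/- Let M(z) = c(z - α)/(1 - \bar{α}z) be a Möbius transformation of the disc, M ≠ id, and B(z) = z ∏_{k=1}^{n-1} (z - a_k)/(1 - \bar{a_k}z) a canonical Blaschke product of degree n with distinct nonzero zeros. If B ∘ M = B, then there exist zeros a_j, a_l of B with |a_j| = |a_l|, c = -a_j/a_l, α = a_l, and M^{n-1}(0) equals one of the nonzero zeros a_i of B. -/

import Mathlib

open Complex

namespace CanonInv

local notation "conj'" => starRingEnd ℂ

lemma one_sub_ne {w : ℂ} (hw : ‖w‖ < 1) : (1 : ℂ) - w ≠ 0 := by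
  intro h
  rw [sub_eq_zero] at h
  rw [← h] at hw
  simp at hw

lemma den_ne {α z : ℂ} (hα : ‖α‖ < 1) (hz : ‖z‖ < 1) :
    (1 : ℂ) - conj' α * z ≠ 0 := by
  apply one_sub_ne
  rw [norm_mul, Complex.norm_conj]
  nlinarith [norm_nonneg α, norm_nonneg z]

lemma sq_identity (α z : ℂ) :
    normSq (1 - conj' α * z) - normSq (z - α) = (1 - normSq α) * (1 - normSq z) := by
  have h : ((normSq (1 - conj' α * z) - normSq (z - α) : ℝ) : ℂ)
      = (((1 - normSq α) * (1 - normSq z) : ℝ) : ℂ) := by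
    push_cast
    rw [← Complex.mul_conj, ← Complex.mul_conj, ← Complex.mul_conj, ← Complex.mul_conj]
    simp only [map_sub, map_mul, map_one, Complex.conj_conj]
    ring
  exact_mod_cast h

lemma normSq_lt_one {z : ℂ} (hz : ‖z‖ < 1) : normSq z < 1 := by
  rw [← Complex.sq_norm]
  nlinarith [norm_nonneg z]

lemma abs_lt_of_normSq_lt {u v : ℂ} (h : normSq u < normSq v) :
    ‖u‖ < ‖v‖ := by
  rw [← Complex.sq_norm, ← Complex.sq_norm] at h
  exact lt_of_pow_lt_pow_left₀ 2 (norm_nonneg v) h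

/-- Möbius transformations of the disc. -/
structure DM where
  c : ℂ
  a : ℂ
  hc : ‖c‖ = 1
  ha : ‖a‖ < 1

noncomputable def DM.ap (f : DM) (z : ℂ) : ℂ := f.c * (z - f.a) / (1 - conj' f.a * z)

lemma DM.c_ne (f : DM) : f.c ≠ 0 := by
  intro h
  have := f.hc
  rw [h] at this
  simp at this

lemma DM.conj_c (f : DM) : conj' f.c = f.c⁻¹ := by
  apply eq_inv_of_mul_eq_one_left
  rw [mul_comm, Complex.mul_conj, ← Complex.sq_norm, f.hc]
  norm_num

lemma DM.ap_mem (f : DM) {z : ℂ} (hz : ‖z‖ < 1) : ‖f.ap z‖ < 1 := by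
  have hden := den_ne f.ha hz
  have hkey := sq_identity f.a z
  have h1 : normSq (z - f.a) < normSq (1 - conj' f.a * z) := by
    nlinarith [normSq_lt_one hz, normSq_lt_one f.ha]
  have h2 : ‖z - f.a‖ < ‖1 - conj' f.a * z‖ :=
    abs_lt_of_normSq_lt h1
  rw [DM.ap, norm_div, norm_mul, f.hc, one_mul, div_lt_one]
  · exact h2
  · exact norm_pos_iff.mpr hden

lemma DM.sub_eq (f : DM) {z w : ℂ} (hz : (1:ℂ) - conj' f.a * z ≠ 0)
    (hw : (1:ℂ) - conj' f.a * w ≠ 0) :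
    f.ap z - f.ap w
      = f.c * (1 - f.a * conj' f.a) * (z - w) / ((1 - conj' f.a * z) * (1 - conj' f.a * w)) := by
  rw [DM.ap, DM.ap, div_sub_div _ _ hz hw]
  congr 1
  ring

lemma DM.one_sub_mul_conj_ne (f : DM) : (1:ℂ) - f.a * conj' f.a ≠ 0 := by
  apply one_sub_ne
  rw [norm_mul, Complex.norm_conj]
  nlinarith [norm_nonneg f.a, f.ha]

lemma DM.inj (f : DM) {z w : ℂ} (hz : ‖z‖ < 1) (hw : ‖w‖ < 1)
    (h : f.ap z = f.ap w) : z = w := by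
  have h1 := f.sub_eq (den_ne f.ha hz) (den_ne f.ha hw)
  rw [h, sub_self] at h1
  have h2 : f.c * (1 - f.a * conj' f.a) * (z - w) = 0 := by
    have hden : ((1:ℂ) - conj' f.a * z) * (1 - conj' f.a * w) ≠ 0 :=
      mul_ne_zero (den_ne f.ha hz) (den_ne f.ha hw)
    rw [eq_comm, div_eq_zero_iff] at h1
    exact h1.resolve_right hden
  rcases mul_eq_zero.1 h2 with h3 | h3
  · rcases mul_eq_zero.1 h3 with h4 | h4
    · exact absurd h4 f.c_ne
    · exact absurd h4 f.one_sub_mul_conj_ne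
  · exact sub_eq_zero.1 h3

def DM.one : DM := ⟨1, 0, by simp, by simp⟩

@[simp] lemma DM.ap_one (z : ℂ) : DM.one.ap z = z := by simp [DM.ap, DM.one]

-- key nonzero facts for composition
lemma comp_den1_ne (f g : DM) : g.c + f.a * conj' g.a ≠ 0 := by
  intro h
  have h2 : g.c = -(f.a * conj' g.a) := by linear_combination h
  have h3 := g.hc
  rw [h2] at h3
  rw [norm_neg, norm_mul, Complex.norm_conj] at h3
  nlinarith [f.ha, g.ha, norm_nonneg f.a, norm_nonneg g.a]

lemma comp_den2_ne (f g : DM) : (1:ℂ) + conj' f.a * g.c * g.a ≠ 0 := by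
  intro h
  have h2 : conj' f.a * g.c * g.a = -1 := by linear_combination h
  have h3 := congrArg (fun w : ℂ => ‖w‖) h2
  rw [norm_mul, norm_mul, Complex.norm_conj, g.hc] at h3
  simp at h3
  nlinarith [f.ha, g.ha, norm_nonneg f.a, norm_nonneg g.a]

lemma comp_abs_c (f g : DM) :
    ‖f.c * (g.c + f.a * conj' g.a) / (1 + conj' f.a * g.c * g.a)‖ = 1 := by
  have hgc : g.c * conj' g.c = 1 := by
    rw [Complex.mul_conj, ← Complex.sq_norm, g.hc]; norm_num
  have key : g.c + f.a * conj' g.a = g.c * conj' (1 + conj' f.a * g.c * g.a) := by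
    simp only [map_add, map_mul, map_one, Complex.conj_conj]
    linear_combination (-(f.a * conj' g.a)) * hgc
  rw [norm_div, norm_mul, f.hc, one_mul, key, norm_mul, g.hc, one_mul,
    Complex.norm_conj, div_self]
  exact norm_ne_zero_iff.mpr (comp_den2_ne f g)

lemma comp_abs_a (f g : DM) :
    ‖(g.c * g.a + f.a) / (g.c + f.a * conj' g.a)‖ < 1 := by
  have hgc : g.c * conj' g.c = 1 := by
    rw [Complex.mul_conj, ← Complex.sq_norm, g.hc]; norm_num
  have key : ((normSq (g.c + f.a * conj' g.a) - normSq (g.c * g.a + f.a) : ℝ) : ℂ)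
      = (((1 - normSq f.a) * (1 - normSq g.a) : ℝ) : ℂ) := by
    push_cast
    rw [← Complex.mul_conj, ← Complex.mul_conj, ← Complex.mul_conj, ← Complex.mul_conj]
    simp only [map_add, map_mul, Complex.conj_conj]
    linear_combination (1 - g.a * conj' g.a) * hgc
  have key2 : normSq (g.c + f.a * conj' g.a) - normSq (g.c * g.a + f.a)
      = (1 - normSq f.a) * (1 - normSq g.a) := by exact_mod_cast key
  have hf2 : normSq f.a < 1 := by
    rw [← Complex.sq_norm]; nlinarith [norm_nonneg f.a, f.ha]
  have hg2 : normSq g.a < 1 := by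
    rw [← Complex.sq_norm]; nlinarith [norm_nonneg g.a, g.ha]
  have h1 : normSq (g.c * g.a + f.a) < normSq (g.c + f.a * conj' g.a) := by nlinarith
  have h2 : ‖g.c * g.a + f.a‖ < ‖g.c + f.a * conj' g.a‖ := by
    rw [← Complex.sq_norm, ← Complex.sq_norm] at h1
    exact lt_of_pow_lt_pow_left₀ 2 (norm_nonneg _) h1
  rw [norm_div, div_lt_one]
  · exact h2
  · exact norm_pos_iff.mpr (comp_den1_ne f g)

noncomputable def DM.comp (f g : DM) : DM :=
  ⟨f.c * (g.c + f.a * conj' g.a) / (1 + conj' f.a * g.c * g.a),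
   (g.c * g.a + f.a) / (g.c + f.a * conj' g.a),
   comp_abs_c f g, comp_abs_a f g⟩

lemma conj_ne {X : ℂ} (hX : X ≠ 0) : conj' X ≠ 0 := by
  intro h
  apply hX
  have := congrArg conj' h
  simpa using this

lemma DM.ap_comp (f g : DM) {z : ℂ} (hz : ‖z‖ < 1) :
    (f.comp g).ap z = f.ap (g.ap z) := by
  have hgz : ‖g.ap z‖ < 1 := g.ap_mem hz
  have h1 : (1:ℂ) - conj' g.a * z ≠ 0 := den_ne g.ha hz
  have h2 : (1:ℂ) - conj' f.a * g.ap z ≠ 0 := den_ne f.ha hgz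
  have h3 : (1:ℂ) - conj' (f.comp g).a * z ≠ 0 := den_ne (f.comp g).ha hz
  have hd1 := comp_den1_ne f g
  have hd2 := comp_den2_ne f g
  have hgc : conj' g.c = g.c⁻¹ := g.conj_c
  have hgc0 : g.c ≠ 0 := g.c_ne
  have hE : ((1:ℂ) - conj' g.a * z) - conj' f.a * (g.c * (z - g.a))
      = (1 - conj' g.a * z) * (1 - conj' f.a * g.ap z) := by
    rw [DM.ap]
    field_simp
  have hEne : ((1:ℂ) - conj' g.a * z) - conj' f.a * (g.c * (z - g.a)) ≠ 0 := by
    rw [hE]; exact mul_ne_zero h1 h2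
  have hnum : g.ap z - f.a
      = (g.c * (z - g.a) - f.a * (1 - conj' g.a * z)) / (1 - conj' g.a * z) := by
    rw [DM.ap, eq_div_iff h1, sub_mul, div_mul_cancel₀ _ h1]
  have hden : (1:ℂ) - conj' f.a * g.ap z
      = ((1 - conj' g.a * z) - conj' f.a * (g.c * (z - g.a))) / (1 - conj' g.a * z) := by
    rw [hE]; field_simp
  have hR : f.ap (g.ap z)
      = f.c * (g.c * (z - g.a) - f.a * (1 - conj' g.a * z))
        / ((1 - conj' g.a * z) - conj' f.a * (g.c * (z - g.a))) := by
    rw [DM.ap, hnum, hden, mul_div_assoc', div_div_div_cancel_right₀ h1]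
  rw [hR, DM.comp, DM.ap]
  simp only [map_div₀, map_add, map_mul, Complex.conj_conj, hgc]
  have e1 : conj' (g.c + f.a * conj' g.a) = g.c⁻¹ + conj' f.a * g.a := by
    simp [map_add, map_mul, Complex.conj_conj, hgc]
  have hd1' : g.c⁻¹ + conj' f.a * g.a ≠ 0 := by rw [← e1]; exact conj_ne hd1
  have hstep : z - (g.c * g.a + f.a) / (g.c + f.a * conj' g.a)
      = (g.c * (z - g.a) - f.a * (1 - conj' g.a * z)) / (g.c + f.a * conj' g.a) := by
    rw [eq_div_iff hd1]
    field_simp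
    ring
  have hBden : (1:ℂ) - (g.c⁻¹ * conj' g.a + conj' f.a) / (g.c⁻¹ + conj' f.a * g.a) * z
      = ((1 - conj' g.a * z) - conj' f.a * (g.c * (z - g.a))) / (1 + conj' f.a * g.c * g.a) := by
    have hQ : (g.c⁻¹ * conj' g.a + conj' f.a) / (g.c⁻¹ + conj' f.a * g.a)
        = (conj' g.a + conj' f.a * g.c) / (1 + conj' f.a * g.c * g.a) := by
      rw [div_eq_div_iff hd1' hd2]
      have hinv : g.c * g.c⁻¹ = 1 := mul_inv_cancel₀ hgc0
      linear_combination (conj' g.a * conj' f.a * g.a - conj' f.a) * hinv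
    rw [hQ, div_mul_eq_mul_div, eq_div_iff hd2, sub_mul, div_mul_cancel₀ _ hd2, one_mul]
    ring
  rw [hstep, hBden, div_mul_div_comm, div_div_eq_mul_div]
  congr 1
  have hd2' : (1:ℂ) + g.c * g.a * conj' f.a ≠ 0 := by
    rw [show g.c * g.a * conj' f.a = conj' f.a * g.c * g.a by ring]; exact hd2
  field_simp


noncomputable def DM.pw (f : DM) : ℕ → DM
  | 0 => DM.one
  | d+1 => f.comp (f.pw d)

lemma DM.ap_pw (f : DM) (d : ℕ) {z : ℂ} (hz : ‖z‖ < 1) :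
    (f.pw d).ap z = (f.ap)^[d] z := by
  induction d with
  | zero => simp [DM.pw]
  | succ d ih =>
    rw [DM.pw, DM.ap_comp f (f.pw d) hz, ih, Function.iterate_succ_apply']

lemma DM.ap_id {f : DM} (h1 : f.c = 1) (h2 : f.a = 0) (z : ℂ) : f.ap z = z := by
  simp [DM.ap, h1, h2]

/-- The key rigidity lemma: a disc Möbius map leaving `B` invariant and fixing
a zero of `B` is the identity. -/
lemma keyL {n1 : ℕ} (a : Fin n1 → ℂ) (ha : ∀ k, ‖a k‖ < 1)
    (ha0 : ∀ k, a k ≠ 0) (hainj : Function.Injective a) (B : ℂ → ℂ)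
    (hB : ∀ z, B z = z * ∏ k, (z - a k) / (1 - conj' (a k) * z))
    (f : DM) (hfB : ∀ z, ‖z‖ < 1 → B (f.ap z) = B z)
    (x : ℂ) (hx : x = 0 ∨ ∃ j, x = a j) (hxb : ‖x‖ < 1)
    (hfx : f.ap x = x) : f.c = 1 ∧ f.a = 0 := by
  classical
  -- factor B through its simple zero at x
  obtain ⟨h, hcont, hne0, hfact⟩ :
      ∃ h : ℂ → ℂ, ContinuousAt h x ∧ h x ≠ 0 ∧
        ∀ w, ‖w‖ < 1 → B w = (w - x) * h w := by
    rcases hx with rfl | ⟨j, rfl⟩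
    · refine ⟨fun w => ∏ k, (w - a k) / (1 - conj' (a k) * w), ?_, ?_, ?_⟩
      · apply tendsto_finset_prod
        intro k _
        exact ContinuousAt.div (continuousAt_id.sub continuousAt_const)
          (continuousAt_const.sub (continuousAt_const.mul continuousAt_id))
          (den_ne (ha k) hxb)
      · rw [Finset.prod_ne_zero_iff]
        intro k _
        simp only [zero_sub, map_zero, mul_zero, sub_zero, div_one]
        exact neg_ne_zero.2 (ha0 k)
      · intro w _
        rw [hB w, sub_zero]
    · refine ⟨fun w => (w / (1 - conj' (a j) * w)) *
          ∏ k ∈ Finset.univ.erase j, (w - a k) / (1 - conj' (a k) * w), ?_, ?_, ?_⟩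
      · apply ContinuousAt.mul
        · exact ContinuousAt.div continuousAt_id
            (continuousAt_const.sub (continuousAt_const.mul continuousAt_id))
            (den_ne (ha j) hxb)
        · apply tendsto_finset_prod
          intro k _
          exact ContinuousAt.div (continuousAt_id.sub continuousAt_const)
            (continuousAt_const.sub (continuousAt_const.mul continuousAt_id))
            (den_ne (ha k) hxb)
      · apply mul_ne_zero
        · exact div_ne_zero (ha0 j) (den_ne (ha j) hxb)
        · rw [Finset.prod_ne_zero_iff]
          intro k hk
          apply div_ne_zero
          · rw [sub_ne_zero]
            intro he
            exact (Finset.mem_erase.1 hk).1 (hainj he).symm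
          · exact den_ne (ha k) hxb
      · intro w _
        rw [hB w, ← Finset.mul_prod_erase _ _ (Finset.mem_univ j)]
        ring
  set β := conj' f.a with hβ
  have hden_x : (1:ℂ) - β * x ≠ 0 := den_ne f.ha hxb
  have hE1 : f.c * (x - f.a) = x * (1 - β * x) := by
    rw [DM.ap] at hfx
    exact (div_eq_iff hden_x).1 hfx
  set q : ℂ → ℂ := fun z => f.c * (1 - f.a * β) / ((1 - β * z) * (1 - β * x)) with hq
  have step1 : ∀ z, ‖z‖ < 1 → z ≠ x → q z * h (f.ap z) = h z := by
    intro z hz hzx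
    have hdz : (1:ℂ) - β * z ≠ 0 := den_ne f.ha hz
    have hsub := f.sub_eq hdz hden_x
    have hqz : (z - x) * q z = f.ap z - f.ap x := by
      rw [hsub, hq]
      ring
    have hmain : (z - x) * (q z * h (f.ap z)) = (z - x) * h z := by
      calc (z - x) * (q z * h (f.ap z)) = ((z - x) * q z) * h (f.ap z) := by ring
        _ = (f.ap z - x) * h (f.ap z) := by rw [hqz, hfx]
        _ = B (f.ap z) := (hfact _ (f.ap_mem hz)).symm
        _ = B z := hfB z hz
        _ = (z - x) * h z := hfact z hz
    exact mul_left_cancel₀ (sub_ne_zero.2 hzx) hmain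
  have hcont_ap : ContinuousAt f.ap x := by
    show ContinuousAt (fun z => f.c * (z - f.a) / (1 - conj' f.a * z)) x
    exact ContinuousAt.div (continuousAt_const.mul (continuousAt_id.sub continuousAt_const))
      (continuousAt_const.sub (continuousAt_const.mul continuousAt_id)) hden_x
  have hcont_q : ContinuousAt q x := by
    apply ContinuousAt.div continuousAt_const
    · exact ((continuousAt_const.sub (continuousAt_const.mul continuousAt_id)).mul
        continuousAt_const)
    · exact mul_ne_zero hden_x hden_x
  have hcontF : ContinuousAt (fun z => q z * h (f.ap z)) x := by
    apply hcont_q.mul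
    have : ContinuousAt h (f.ap x) := by rw [hfx]; exact hcont
    exact this.comp hcont_ap
  have hev : (fun z => q z * h (f.ap z)) =ᶠ[nhdsWithin x {x}ᶜ] h := by
    have hball : ∀ᶠ z in nhds x, ‖z‖ < 1 := by
      have hopen : IsOpen {z : ℂ | ‖z‖ < 1} := by
        have : {z : ℂ | ‖z‖ < 1} = Metric.ball (0:ℂ) 1 := by
          ext w
          rw [Metric.mem_ball, Complex.dist_eq, sub_zero]
          rfl
        rw [this]
        exact Metric.isOpen_ball
      exact hopen.eventually_mem hxb
    filter_upwards [eventually_nhdsWithin_of_eventually_nhds hball,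
      self_mem_nhdsWithin] with z hz1 hz2
    exact step1 z hz1 hz2
  have ht1 : Filter.Tendsto (fun z => q z * h (f.ap z)) (nhdsWithin x {x}ᶜ)
      (nhds (q x * h (f.ap x))) := hcontF.continuousWithinAt
  have ht2 : Filter.Tendsto (fun z => q z * h (f.ap z)) (nhdsWithin x {x}ᶜ)
      (nhds (h x)) := Filter.Tendsto.congr' hev.symm hcont.continuousWithinAt
  have hqx1 : q x * h x = h x := by
    have := tendsto_nhds_unique ht1 ht2
    rwa [hfx] at this
  have hqx : q x = 1 := by
    have : q x * h x = 1 * h x := by rw [hqx1, one_mul]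
    exact mul_right_cancel₀ hne0 this
  have hE2 : f.c * (1 - f.a * β) = (1 - β * x) * (1 - β * x) := by
    rw [hq] at hqx
    exact (div_eq_one_iff_eq (mul_ne_zero hden_x hden_x)).1 hqx
  -- algebra
  have hc2 : f.c = 1 - 2 * (β * x) := by
    have hcalc : f.c * (1 - β * x) = (1 - 2 * (β * x)) * (1 - β * x) := by
      linear_combination hE2 - β * hE1
    exact mul_right_cancel₀ hden_x hcalc
  have hba : β * (x * x) = -(f.c * f.a) := by
    linear_combination x * hc2 - hE1
  have habs2 : ‖f.a‖ * (‖x‖ * ‖x‖) = ‖f.a‖ := by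
    have := congrArg (fun w : ℂ => ‖w‖) hba
    simpa [norm_mul, norm_neg, Complex.norm_conj, f.hc, hβ] using this
  have ha0' : f.a = 0 := by
    by_contra hne
    have hpos : 0 < ‖f.a‖ := norm_pos_iff.mpr hne
    have hx2 : ‖x‖ * ‖x‖ < 1 := by
      nlinarith [norm_nonneg x]
    nlinarith
  refine ⟨?_, ha0'⟩
  rw [hc2, hβ, ha0', map_zero, zero_mul, mul_zero, sub_zero]

section Orbits
set_option linter.unusedSectionVars false
variable {γ : Type*} [DecidableEq γ]

lemma iter_mem (f : γ → γ) (T : Finset γ) (hmap : ∀ x ∈ T, f x ∈ T) :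
    ∀ (i : ℕ) (x : γ), x ∈ T → f^[i] x ∈ T := by
  intro i
  induction i with
  | zero => intro x hx; simpa using hx
  | succ i ih =>
    intro x hx
    rw [Function.iterate_succ_apply']
    exact hmap _ (ih x hx)

lemma iter_cancel (f : γ → γ) (T : Finset γ) (hmap : ∀ x ∈ T, f x ∈ T)
    (hinj : ∀ x ∈ T, ∀ y ∈ T, f x = f y → x = y) :
    ∀ (i : ℕ) (x y : γ), x ∈ T → y ∈ T → f^[i] x = f^[i] y → x = y := by
  intro i
  induction i with
  | zero => intro x y _ _ h; simpa using h
  | succ i ih =>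
    intro x y hx hy h
    rw [Function.iterate_succ_apply, Function.iterate_succ_apply] at h
    exact hinj x hx y hy (ih _ _ (hmap x hx) (hmap y hy) h)

lemma period_dvd_card (f : γ → γ) (m : ℕ) (hm : 0 < m) :
    ∀ (N : ℕ) (T : Finset γ), T.card ≤ N →
    (∀ x ∈ T, f x ∈ T) → (∀ x ∈ T, ∀ y ∈ T, f x = f y → x = y) →
    (∀ x ∈ T, f^[m] x = x) → (∀ x ∈ T, ∀ d, 0 < d → d < m → f^[d] x ≠ x) →
    m ∣ T.card := by
  intro N
  induction N with
  | zero =>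
    intro T hT _ _ _ _
    have : T.card = 0 := Nat.le_zero.1 hT
    rw [this]
    exact dvd_zero m
  | succ N ih =>
    intro T hT hmap hinj hper hmin
    rcases Finset.eq_empty_or_nonempty T with rfl | ⟨x, hx⟩
    · simp
    · set O : Finset γ := (Finset.range m).image (fun i => f^[i] x) with hO
      have hOsub : O ⊆ T := by
        intro y hy
        rw [hO, Finset.mem_image] at hy
        obtain ⟨i, _, rfl⟩ := hy
        exact iter_mem f T hmap i x hx
      have hdistinct : ∀ i j, i < j → j < m → f^[i] x ≠ f^[j] x := by
        intro i j hij hj he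
        have h1 : f^[i] (f^[j-i] x) = f^[i] x := by
          rw [← Function.iterate_add_apply, show i + (j - i) = j by omega]
          exact he.symm
        have h2 : f^[j-i] x = x :=
          iter_cancel f T hmap hinj i _ x (iter_mem f T hmap _ x hx) hx h1
        exact hmin x hx (j - i) (by omega) (by omega) h2
      have hcardO : O.card = m := by
        rw [hO, Finset.card_image_of_injOn, Finset.card_range]
        intro i hi j hj he
        rw [Finset.mem_coe, Finset.mem_range] at hi hj
        by_contra hne
        rcases Nat.lt_or_ge i j with h | h
        · exact hdistinct i j h hj he
        · exact hdistinct j i (by omega) hi he.symm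
      have hxO : x ∈ O := by
        rw [hO, Finset.mem_image]
        exact ⟨0, Finset.mem_range.2 hm, rfl⟩
      set T' : Finset γ := T \ O with hT'
      have hT'map : ∀ y ∈ T', f y ∈ T' := by
        intro y hy
        rw [hT', Finset.mem_sdiff] at hy ⊢
        obtain ⟨hyT, hyO⟩ := hy
        refine ⟨hmap y hyT, ?_⟩
        intro hfyO
        rw [hO, Finset.mem_image] at hfyO
        obtain ⟨i, hi, he⟩ := hfyO
        rw [Finset.mem_range] at hi
        rcases Nat.eq_zero_or_pos i with rfl | hipos
        · -- f y = x = f^[m] x = f (f^[m-1] x)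
          have hs : f^[m] x = f (f^[m-1] x) := by
            have := Function.iterate_succ_apply' f (m-1) x
            rwa [show (m-1).succ = m by omega] at this
          have h1 : f y = f (f^[m-1] x) := by
            rw [← hs, hper x hx]
            simpa using he.symm
          have h2 : y = f^[m-1] x := hinj y hyT _ (iter_mem f T hmap _ x hx) h1
          apply hyO
          rw [hO, Finset.mem_image]
          exact ⟨m-1, Finset.mem_range.2 (by omega), h2.symm⟩
        · have hs : f^[i] x = f (f^[i-1] x) := by
            have := Function.iterate_succ_apply' f (i-1) x
            rwa [show (i-1).succ = i by omega] at this
          have h1 : f y = f (f^[i-1] x) := by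
            rw [← hs]
            exact he.symm
          have h2 : y = f^[i-1] x := hinj y hyT _ (iter_mem f T hmap _ x hx) h1
          apply hyO
          rw [hO, Finset.mem_image]
          exact ⟨i-1, Finset.mem_range.2 (by omega), h2.symm⟩
      have hcard' : T'.card = T.card - m := by
        rw [hT', Finset.card_sdiff_of_subset hOsub, hcardO]
      have hmle : m ≤ T.card := by
        rw [← hcardO]
        exact Finset.card_le_card hOsub
      have hdvd' : m ∣ T'.card := by
        apply ih T' (by omega)
        · exact hT'map
        · intro u hu v hv he
          rw [hT', Finset.mem_sdiff] at hu hv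
          exact hinj u hu.1 v hv.1 he
        · intro u hu
          rw [hT', Finset.mem_sdiff] at hu
          exact hper u hu.1
        · intro u hu
          rw [hT', Finset.mem_sdiff] at hu
          exact hmin u hu.1
      have : T.card = T'.card + m := by omega
      rw [this]
      exact Nat.dvd_add hdvd' dvd_rfl

end Orbits

end CanonInv


open CanonInv

/-- Necessary conditions on `M` for a canonical Blaschke product `B` of degree
`n` to satisfy `B ∘ M = B`: `M z = c (z - a_l)/(1 - conj a_l z)` with
`|a_j| = |a_l|`, `c = -a_j/a_l`, and `M^[n-1] 0` is a nonzero zero of `B`. -/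
theorem canonical_invariance_necessary (n : ℕ) (hn : 2 ≤ n)
    (a : Fin (n - 1) → ℂ) (ha : ∀ k, ‖a k‖ < 1)
    (ha0 : ∀ k, a k ≠ 0) (hainj : Function.Injective a) (B : ℂ → ℂ)
    (hB : ∀ z, B z = z * ∏ k, (z - a k) / (1 - (starRingEnd ℂ) (a k) * z))
    (c α : ℂ) (hc : ‖c‖ = 1) (hα : ‖α‖ < 1) (M : ℂ → ℂ)
    (hM : ∀ z, M z = c * (z - α) / (1 - (starRingEnd ℂ) α * z))
    (hne : ∃ z ∈ Metric.ball (0 : ℂ) 1, M z ≠ z)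
    (hinv : ∀ z ∈ Metric.ball (0 : ℂ) 1, B (M z) = B z) :
    ∃ j l : Fin (n - 1), ‖a j‖ = ‖a l‖ ∧
      c = -(a j / a l) ∧ α = a l ∧ ∃ i : Fin (n - 1), M^[n - 1] 0 = a i := by
  classical
  have hball_iff : ∀ w : ℂ, w ∈ Metric.ball (0:ℂ) 1 ↔ ‖w‖ < 1 := by
    intro w; rw [Metric.mem_ball, Complex.dist_eq, sub_zero]
  set MD : DM := ⟨c, α, hc, hα⟩ with hMD
  have hMap : ∀ z, M z = MD.ap z := by intro z; rw [hM z]; rfl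
  have hMball : ∀ {w : ℂ}, ‖w‖ < 1 → ‖M w‖ < 1 := by
    intro w hw; rw [hMap]; exact MD.ap_mem hw
  have hMinj : ∀ {u v : ℂ}, ‖u‖ < 1 → ‖v‖ < 1 → M u = M v → u = v := by
    intro u v hu hv he
    exact MD.inj hu hv (by rw [← hMap, ← hMap]; exact he)
  set S : Finset ℂ := insert 0 (Finset.image a Finset.univ) with hS
  have hmemS : ∀ w : ℂ, w ∈ S ↔ (w = 0 ∨ ∃ j, w = a j) := by
    intro w
    constructor
    · intro hw
      rcases Finset.mem_insert.1 hw with h | h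
      · exact Or.inl h
      · obtain ⟨k, _, hk⟩ := Finset.mem_image.1 h
        exact Or.inr ⟨k, hk.symm⟩
    · rintro (rfl | ⟨j, rfl⟩)
      · exact Finset.mem_insert_self _ _
      · exact Finset.mem_insert_of_mem (Finset.mem_image_of_mem a (Finset.mem_univ j))
  have hSball : ∀ w ∈ S, ‖w‖ < 1 := by
    intro w hw
    rcases (hmemS w).1 hw with rfl | ⟨j, rfl⟩
    · simp
    · exact ha j
  have hBzero : ∀ w : ℂ, ‖w‖ < 1 → (B w = 0 ↔ w ∈ S) := by
    intro w hw
    rw [hB w, hmemS w, mul_eq_zero, Finset.prod_eq_zero_iff]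
    constructor
    · rintro (rfl | ⟨k, _, hk⟩)
      · exact Or.inl rfl
      · refine Or.inr ⟨k, ?_⟩
        rcases div_eq_zero_iff.1 hk with h1 | h1
        · exact sub_eq_zero.1 h1
        · exact absurd h1 (den_ne (ha k) hw)
    · rintro (rfl | ⟨j, rfl⟩)
      · exact Or.inl rfl
      · refine Or.inr ⟨j, Finset.mem_univ j, ?_⟩
        rw [div_eq_zero_iff]
        exact Or.inl (sub_self _)
  have hinv' : ∀ z, ‖z‖ < 1 → B (M z) = B z := fun z hz =>
    hinv z ((hball_iff z).2 hz)
  have hMS : ∀ w ∈ S, M w ∈ S := by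
    intro w hw
    have hwb := hSball w hw
    have hbmw := hinv' w hwb
    rw [(hBzero w hwb).2 hw] at hbmw
    exact (hBzero (M w) (hMball hwb)).1 hbmw
  have hkey : ∀ (f : DM), (∀ z, ‖z‖ < 1 → B (f.ap z) = B z) →
      ∀ x ∈ S, f.ap x = x → ∀ z, f.ap z = z := by
    intro f hfB x hx hfx z
    obtain ⟨h1, h2⟩ := keyL a ha ha0 hainj B hB f hfB x ((hmemS x).1 hx) (hSball x hx) hfx
    exact DM.ap_id h1 h2 z
  have hMne : ∃ z, ‖z‖ < 1 ∧ M z ≠ z := by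
    obtain ⟨z, hz1, hz2⟩ := hne
    exact ⟨z, (hball_iff z).1 hz1, hz2⟩
  have hMDB : ∀ z, ‖z‖ < 1 → B (MD.ap z) = B z := by
    intro z hz; rw [← hMap]; exact hinv' z hz
  have h0S : (0:ℂ) ∈ S := by rw [hmemS]; exact Or.inl rfl
  have hM0ne : M 0 ≠ 0 := by
    intro h0
    obtain ⟨z, hz, hzne⟩ := hMne
    apply hzne
    rw [hMap]
    exact hkey MD hMDB 0 h0S (by rw [← hMap]; exact h0) z
  have hM0S : M 0 ∈ S := hMS 0 h0S
  obtain ⟨j, hj⟩ : ∃ j, M 0 = a j := by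
    rcases (hmemS _).1 hM0S with h | h
    · exact absurd h hM0ne
    · exact h
  have hMα : M α = 0 := by rw [hM α]; simp
  have hα0 : α ≠ 0 := by
    intro h
    apply hM0ne
    rw [hM 0, h]
    simp
  have hinjS : Set.InjOn M S := fun u hu v hv he =>
    hMinj (hSball u hu) (hSball v hv) he
  have himg : S.image M = S := by
    apply Finset.eq_of_subset_of_card_le
    · intro w hw
      obtain ⟨u, hu, rfl⟩ := Finset.mem_image.1 hw
      exact hMS u hu
    · rw [Finset.card_image_of_injOn hinjS]
  have hαS : α ∈ S := by
    have h0img : (0:ℂ) ∈ S.image M := by rw [himg]; exact h0S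
    obtain ⟨y, hy, hy0⟩ := Finset.mem_image.1 h0img
    have hyα : y = α := hMinj (hSball y hy) hα (by rw [hy0, hMα])
    rwa [← hyα]
  obtain ⟨l, hl⟩ : ∃ l, α = a l := by
    rcases (hmemS α).1 hαS with h | h
    · exact absurd h hα0
    · exact h
  have hM0val : M 0 = -(c * α) := by
    rw [hM 0]
    simp
  have h2 : -(c * α) = a j := hM0val.symm.trans hj
  have hcval : c = -(a j / a l) := by
    have h3 : c * a l = -(a j) := by rw [← hl]; linear_combination -h2
    have h4 : c = -(a j) / a l := eq_div_of_mul_eq (ha0 l) h3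
    rwa [neg_div] at h4
  have habsjl : ‖a j‖ = ‖a l‖ := by
    have h5 := congrArg (fun w : ℂ => ‖w‖) h2
    rw [norm_neg, norm_mul, hc, one_mul, hl] at h5
    exact h5.symm
  refine ⟨j, l, habsjl, hcval, hl, ?_⟩
  have hiterS : ∀ d : ℕ, M^[d] 0 ∈ S := by
    intro d
    induction d with
    | zero => simpa using h0S
    | succ d ih =>
      rw [Function.iterate_succ_apply']
      exact hMS _ ih
  have hfinal0 : M^[n-1] 0 ≠ 0 := by
    intro h0
    have hex : ∃ d, 0 < d ∧ M^[d] 0 = 0 := ⟨n-1, by omega, h0⟩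
    set m := Nat.find hex with hmdef
    obtain ⟨hm1, hm2⟩ : 0 < m ∧ M^[m] 0 = 0 := Nat.find_spec hex
    have hpw : ∀ (d : ℕ) (z : ℂ), ‖z‖ < 1 → (MD.pw d).ap z = M^[d] z := by
      intro d z hz
      rw [DM.ap_pw MD d hz]
      have hfe : M = MD.ap := funext hMap
      rw [hfe]
    have hpwB : ∀ (d : ℕ) (z : ℂ), ‖z‖ < 1 →
        B (M^[d] z) = B z ∧ ‖M^[d] z‖ < 1 := by
      intro d
      induction d with
      | zero =>
        intro z hz
        simp only [Function.iterate_zero_apply]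
        exact ⟨trivial, hz⟩
      | succ d ih =>
        intro z hz
        obtain ⟨ih1, ih2⟩ := ih z hz
        rw [Function.iterate_succ_apply']
        exact ⟨by rw [hinv' _ ih2, ih1], hMball ih2⟩
    have hMmid : ∀ z, ‖z‖ < 1 → M^[m] z = z := by
      intro z hz
      have hfB' : ∀ w, ‖w‖ < 1 → B ((MD.pw m).ap w) = B w := by
        intro w hw
        rw [hpw m w hw]
        exact (hpwB m w hw).1
      have hfx' : (MD.pw m).ap 0 = 0 := by
        rw [hpw m 0 (by simp)]
        exact hm2
      rw [← hpw m z hz]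
      exact hkey _ hfB' 0 h0S hfx' z
    have hm_ge2 : 2 ≤ m := by
      by_contra hlt
      have hm1' : m = 1 := by omega
      rw [hm1'] at hm2
      simp only [Function.iterate_one] at hm2
      exact hM0ne hm2
    have hperS : ∀ x ∈ S, M^[m] x = x := fun x hx => hMmid x (hSball x hx)
    have hminS : ∀ x ∈ S, ∀ d, 0 < d → d < m → M^[d] x ≠ x := by
      intro x hx d hd1 hd2 he
      have hfB' : ∀ w, ‖w‖ < 1 → B ((MD.pw d).ap w) = B w := by
        intro w hw
        rw [hpw d w hw]
        exact (hpwB d w hw).1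
      have hfx' : (MD.pw d).ap x = x := by
        rw [hpw d x (hSball x hx)]
        exact he
      have hid0 : M^[d] 0 = 0 := by
        rw [← hpw d 0 (by simp)]
        exact hkey _ hfB' x hx hfx' 0
      exact Nat.find_min hex hd2 ⟨hd1, hid0⟩
    have hnotmem : (0:ℂ) ∉ Finset.image a Finset.univ := by
      intro hmem
      obtain ⟨k, _, hk⟩ := Finset.mem_image.1 hmem
      exact ha0 k hk
    have hcardS : S.card = n := by
      rw [hS, Finset.card_insert_of_notMem hnotmem,
        Finset.card_image_of_injective _ hainj, Finset.card_univ, Fintype.card_fin]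
      omega
    have hdvd_n : m ∣ n := by
      rw [← hcardS]
      exact period_dvd_card M m (by omega) S.card S le_rfl hMS
        (fun u hu v hv => hMinj (hSball u hu) (hSball v hv)) hperS hminS
    have hqm : ∀ q : ℕ, M^[m*q] 0 = 0 := by
      intro q
      induction q with
      | zero => simp
      | succ q ih =>
        have hmq : m*(q+1) = m*q + m := by ring
        rw [hmq, Function.iterate_add_apply, hm2, ih]
    have hr : M^[(n-1) % m] 0 = 0 := by
      have hsplit : (n-1) % m + m * ((n-1)/m) = n-1 := Nat.mod_add_div (n-1) m
      have hadd := Function.iterate_add_apply M ((n-1)%m) (m*((n-1)/m)) 0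
      rw [hsplit, hqm _] at hadd
      rw [← hadd]
      exact h0
    have hrdvd : m ∣ (n-1) := by
      rcases Nat.eq_zero_or_pos ((n-1) % m) with hz | hp
      · exact Nat.dvd_of_mod_eq_zero hz
      · exact absurd hr (hminS 0 h0S _ hp (Nat.mod_lt _ (by omega)))
    have hdvd1 : m ∣ 1 := by
      have h1 : n - (n-1) = 1 := by omega
      have := Nat.dvd_sub hdvd_n hrdvd
      rwa [h1] at this
    have := Nat.le_of_dvd one_pos hdvd1
    omega
  rcases (hmemS _).1 (hiterS (n-1)) with h | h
  · exact absurd h hfinal0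
  · obtain ⟨i, hi⟩ := h
    exact ⟨i, hi⟩
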